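/- Let K and K' be non-empty compact convex subsets of ℝ^d with K ⊆ interior-relative enlargement K_δ ⊆ K' for some δ > 0 (i.e., K' ⊇ K_δ = K + B̄(0,δ)). Then for every non-empty compact convex P ⊇ K' there exists θ ∈ (0,1) and C > 0 such that exp(h_{-K}(x))^{1-θ} · exp(h_{-P}(x))^{θ} ≤ C·exp(h_{-K'}(x)) for all x ∈ ℝ^d. -/
import Mathlib


open scoped RealInnerProductSpace Pointwise

/-- Supporting function of a set `K ⊆ ℝ^d`: `h_K(x) = sup_{η ∈ K} ⟪x, η⟫`. -/
noncomputable def suppFn {d : ℕ} (K : Set (EuclideanSpace ℝ (Fin d)))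
    (x : EuclideanSpace ℝ (Fin d)) : ℝ :=
  sSup ((fun η => ⟪x, η⟫) '' K)

lemma suppFn_bddAbove {d : ℕ} (K : Set (EuclideanSpace ℝ (Fin d))) (hK : IsCompact K)
    (x : EuclideanSpace ℝ (Fin d)) : BddAbove ((fun η => ⟪x, η⟫) '' K) :=
  (hK.image (Continuous.inner continuous_const continuous_id)).bddAbove

lemma le_suppFn {d : ℕ} {K : Set (EuclideanSpace ℝ (Fin d))} (hK : IsCompact K)
    {η : EuclideanSpace ℝ (Fin d)} (hη : η ∈ K) (x : EuclideanSpace ℝ (Fin d)) :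
    ⟪x, η⟫ ≤ suppFn K x :=
  le_csSup (suppFn_bddAbove K hK x) ⟨η, hη, rfl⟩

theorem omega_switched (d : ℕ) (K K' : Set (EuclideanSpace ℝ (Fin d)))
    (hne : K.Nonempty) (hcomp : IsCompact K) (hconv : Convex ℝ K)
    (hne' : K'.Nonempty) (hcomp' : IsCompact K') (hconv' : Convex ℝ K')
    (δ : ℝ) (hδ : 0 < δ)
    (hKδ : K + Metric.closedBall (0 : EuclideanSpace ℝ (Fin d)) δ ⊆ K') :
    ∀ P : Set (EuclideanSpace ℝ (Fin d)), P.Nonempty → IsCompact P → Convex ℝ P → K' ⊆ P →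
      ∃ θ ∈ Set.Ioo (0 : ℝ) 1, ∃ C > (0 : ℝ), ∀ x,
        Real.exp (suppFn (-K) x) ^ (1 - θ) * Real.exp (suppFn (-P) x) ^ θ
          ≤ C * Real.exp (suppFn (-K') x) := by
  intro P hPne hPcomp hPconv hK'P
  obtain ⟨η₀, hη₀⟩ := hne
  obtain ⟨R, hR⟩ := hPcomp.isBounded.subset_closedBall 0
  set M : ℝ := |R| + ‖η₀‖ + 1 with hMdef
  have hM : 0 < M := by positivity
  set θ : ℝ := δ / (δ + M) with hθdef
  have hθ0 : 0 < θ := by positivity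
  have hθ1 : θ < 1 := by
    rw [hθdef, div_lt_one (by positivity)]; linarith
  have hθM : θ * M ≤ δ := by
    rw [hθdef, div_mul_eq_mul_div, div_le_iff₀ (by positivity)]
    nlinarith
  refine ⟨θ, ⟨hθ0, hθ1⟩, 1, one_pos, ?_⟩
  intro x
  set a := suppFn (-K) x with ha
  set b := suppFn (-P) x with hb
  set c := suppFn (-K') x with hc
  -- Key inequality 1 : a + δ‖x‖ ≤ c
  have key1 : a + δ * ‖x‖ ≤ c := by
    have : a ≤ c - δ * ‖x‖ := by
      rw [ha, suppFn]
      refine csSup_le ((Set.nonempty_neg.mpr ⟨η₀, hη₀⟩).image _) ?_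
      rintro r ⟨η, hη, rfl⟩
      have hξK : -η ∈ K := hη
      rcases eq_or_ne x 0 with hx | hx
      · have h0 : (⟪x, η⟫ : ℝ) = 0 := by rw [hx]; simp
        have hmem : -η + (0:EuclideanSpace ℝ (Fin d)) ∈ K' := by
          refine hKδ ?_
          exact Set.add_mem_add hξK (by simp [le_of_lt hδ])
        have : (⟪x, -(-η + 0)⟫ : ℝ) ≤ c := le_suppFn hcomp'.neg (Set.neg_mem_neg.mpr hmem) x
        simp [hx] at this ⊢
        linarith
      · set u : EuclideanSpace ℝ (Fin d) := -((δ / ‖x‖) • x) with hu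
        have hxn : (0:ℝ) < ‖x‖ := norm_pos_iff.mpr hx
        have hunorm : ‖u‖ ≤ δ := by
          rw [hu, norm_neg, norm_smul, norm_div, Real.norm_eq_abs, abs_of_pos hδ,
            Real.norm_eq_abs, abs_of_pos hxn, div_mul_cancel₀ _ hxn.ne']
        have hmem : -η + u ∈ K' :=
          hKδ (Set.add_mem_add hξK (by simpa [Metric.mem_closedBall, dist_zero_right] using hunorm))
        have hle : (⟪x, -(-η + u)⟫ : ℝ) ≤ c := le_suppFn hcomp'.neg (Set.neg_mem_neg.mpr hmem) x
        have hinner : (⟪x, -(-η + u)⟫ : ℝ) = ⟪x, η⟫ + δ * ‖x‖ := by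
          rw [hu]
          rw [inner_neg_right, inner_add_right, inner_neg_right, inner_neg_right,
            inner_smul_right, real_inner_self_eq_norm_sq]
          field_simp
          ring
        linarith [hle, hinner ▸ hle]
    linarith
  -- Key inequality 2 : b ≤ a + M‖x‖
  have key2 : b ≤ a + M * ‖x‖ := by
    rw [hb, suppFn]
    refine csSup_le ((Set.nonempty_neg.mpr hPne).image _) ?_
    rintro r ⟨ξ, hξ, rfl⟩
    have h1 : (⟪x, ξ⟫ : ℝ) ≤ ‖x‖ * ‖ξ‖ := real_inner_le_norm x ξ
    have hξn : ‖ξ‖ ≤ |R| := by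
      have := hR (Set.neg_mem_neg.mp (by simpa using hξ) : -ξ ∈ P)
      rw [Metric.mem_closedBall, dist_zero_right, norm_neg] at this
      exact this.trans (le_abs_self R)
    have h2 : (⟪x, -η₀⟫ : ℝ) ≤ a := le_suppFn hcomp.neg (Set.neg_mem_neg.mpr hη₀) x
    have h3 : -(‖x‖ * ‖η₀‖) ≤ (⟪x, -η₀⟫ : ℝ) := by
      have := real_inner_le_norm x (-η₀)
      have := abs_real_inner_le_norm x (-η₀)
      rw [norm_neg] at this
      linarith [neg_abs_le (⟪x, -η₀⟫ : ℝ), this]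
    have hxnn : (0:ℝ) ≤ ‖x‖ := norm_nonneg x
    nlinarith [mul_le_mul_of_nonneg_left hξn hxnn]
  -- combine
  have hsum : a * (1 - θ) + b * θ ≤ c := by
    have h4 : θ * (b - a) ≤ θ * (M * ‖x‖) :=
      mul_le_mul_of_nonneg_left (by linarith) hθ0.le
    have h5 : θ * (M * ‖x‖) ≤ δ * ‖x‖ := by
      rw [← mul_assoc]
      exact mul_le_mul_of_nonneg_right hθM (norm_nonneg x)
    nlinarith
  calc Real.exp a ^ (1 - θ) * Real.exp b ^ θ
      = Real.exp (a * (1 - θ)) * Real.exp (b * θ) := by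
        rw [Real.exp_mul, Real.exp_mul]
    _ = Real.exp (a * (1 - θ) + b * θ) := (Real.exp_add _ _).symm
    _ ≤ Real.exp c := Real.exp_le_exp.mpr hsum
    _ = 1 * Real.exp c := (one_mul _).symm
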